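/- Let k be a field of characteristic zero and d ≥ 0 an integer. The space of regular functions f on SL₂(k) satisfying f(bg) = t^{-d} f(g) for all g ∈ SL₂ and all upper triangular b = [[t, x],[0, t^{-1}]], has dimension d + 1; moreover, the restriction of such f to the unipotent subgroup via u ↦ f(w·[[1,x],[0,1]]) (w the standard Weyl element) identifies this space with the polynomials in x of degree at most d. -/

import Mathlib

open Matrix

/-- The upper triangular element `[[t, x], [0, t⁻¹]]` of `SL₂(k)`. -/
noncomputable def borelElt (k : Type*) [Field k] (t : kˣ) (x : k) :
    Matrix.SpecialLinearGroup (Fin 2) k :=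
  ⟨!![(t : k), x; 0, ((t⁻¹ : kˣ) : k)], by
    simp [Matrix.det_fin_two_of]⟩

/-- The standard Weyl element `w = [[0, 1], [-1, 0]]` of `SL₂(k)`. -/
def weylElt (k : Type*) [Field k] : Matrix.SpecialLinearGroup (Fin 2) k :=
  ⟨!![0, 1; -1, 0], by simp [Matrix.det_fin_two_of]⟩

/-- The unipotent element `[[1, x], [0, 1]]` of `SL₂(k)`. -/
def unipElt (k : Type*) [Field k] (x : k) : Matrix.SpecialLinearGroup (Fin 2) k :=
  ⟨!![1, x; 0, 1], by simp [Matrix.det_fin_two_of]⟩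

/-- The space of regular (polynomial) functions `f` on `SL₂(k)` satisfying
`f(bg) = t^{-d} f(g)` for all upper triangular `b = [[t, x], [0, t⁻¹]]`. -/
noncomputable def borelWeilSpace (k : Type*) [Field k] (d : ℕ) :
    Submodule k (Matrix.SpecialLinearGroup (Fin 2) k → k) where
  carrier := {f |
    (∃ P : MvPolynomial (Fin 2 × Fin 2) k,
      ∀ g : Matrix.SpecialLinearGroup (Fin 2) k,
        f g = MvPolynomial.eval (fun p => (g : Matrix (Fin 2) (Fin 2) k) p.1 p.2) P) ∧
    ∀ (t : kˣ) (x : k) (g : Matrix.SpecialLinearGroup (Fin 2) k),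
      f (borelElt k t x * g) = ((t : k)⁻¹) ^ d * f g}
  add_mem' := by
    rintro f g ⟨⟨P, hP⟩, hf⟩ ⟨⟨Q, hQ⟩, hg⟩
    refine ⟨⟨P + Q, fun h => ?_⟩, fun t x h => ?_⟩
    · simp [hP h, hQ h]
    · simp only [Pi.add_apply, hf t x h, hg t x h]; ring
  zero_mem' := ⟨⟨0, by simp⟩, by simp⟩
  smul_mem' := by
    rintro c f ⟨⟨P, hP⟩, hf⟩
    refine ⟨⟨MvPolynomial.C c * P, fun h => ?_⟩, fun t x h => ?_⟩
    · simp [hP h]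
    · simp only [Pi.smul_apply, hf t x h, smul_eq_mul]; ring

section BWauxSection
open Polynomial

namespace BWaux

def lowerElt (k : Type*) [Field k] (s : k) : Matrix.SpecialLinearGroup (Fin 2) k :=
  ⟨!![1, 0; s, 1], by simp [Matrix.det_fin_two_of]⟩

variable {k : Type*} [Field k]

lemma det_rel (g : Matrix.SpecialLinearGroup (Fin 2) k) :
    (g : Matrix (Fin 2) (Fin 2) k) 0 0 * g 1 1 - g 0 1 * g 1 0 = 1 := by
  have := g.2
  rwa [Matrix.det_fin_two] at this

lemma wu_coe (x : k) : ((weylElt k * unipElt k x : Matrix.SpecialLinearGroup (Fin 2) k) :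
    Matrix (Fin 2) (Fin 2) k) = !![0, 1; -1, -x] := by
  ext i j
  fin_cases i <;> fin_cases j <;>
    (simp only [Matrix.SpecialLinearGroup.coe_mul]; simp [weylElt, unipElt, Matrix.mul_apply, Fin.sum_univ_two])

lemma bruhat (g : Matrix.SpecialLinearGroup (Fin 2) k)
    (hc : (g : Matrix (Fin 2) (Fin 2) k) 1 0 ≠ 0) :
    g = borelElt k (Units.mk0 (-((g : Matrix (Fin 2) (Fin 2) k) 1 0)⁻¹) (by simpa using hc))
          (-(g : Matrix (Fin 2) (Fin 2) k) 0 0) *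
        (weylElt k * unipElt k
          ((g : Matrix (Fin 2) (Fin 2) k) 1 1 / (g : Matrix (Fin 2) (Fin 2) k) 1 0)) := by
  have hdet := det_rel g
  ext i j
  fin_cases i <;> fin_cases j <;>
    first
    | (simp only [Matrix.SpecialLinearGroup.coe_mul]; simp [borelElt, weylElt, unipElt, Matrix.mul_apply, Fin.sum_univ_two]; done)
    | (simp only [Matrix.SpecialLinearGroup.coe_mul]; simp [borelElt, weylElt, unipElt, Matrix.mul_apply, Fin.sum_univ_two]
       field_simp
       try first
       | linear_combination (-((g : Matrix (Fin 2) (Fin 2) k) 1 0) - 1) * hdet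
       | linear_combination (g : Matrix (Fin 2) (Fin 2) k) 1 0 * hdet
       | linear_combination -hdet
       | linear_combination hdet
       | ring)

/-- Key formula: f on the big cell is determined by its restriction to `wU`. -/
lemma key {d : ℕ} {f : Matrix.SpecialLinearGroup (Fin 2) k → k}
    (hf : f ∈ borelWeilSpace k d) (g : Matrix.SpecialLinearGroup (Fin 2) k)
    (hc : (g : Matrix (Fin 2) (Fin 2) k) 1 0 ≠ 0) :
    f g = (-(g : Matrix (Fin 2) (Fin 2) k) 1 0) ^ d *
      f (weylElt k * unipElt k
        ((g : Matrix (Fin 2) (Fin 2) k) 1 1 / (g : Matrix (Fin 2) (Fin 2) k) 1 0)) := by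
  obtain ⟨-, heq⟩ := hf
  have h := heq (Units.mk0 (-((g : Matrix (Fin 2) (Fin 2) k) 1 0)⁻¹) (by simpa using hc))
    (-(g : Matrix (Fin 2) (Fin 2) k) 0 0)
    (weylElt k * unipElt k
      ((g : Matrix (Fin 2) (Fin 2) k) 1 1 / (g : Matrix (Fin 2) (Fin 2) k) 1 0))
  rw [← bruhat g hc] at h
  rw [h]
  congr 1
  rw [Units.val_mk0, inv_neg, inv_inv]

lemma eval_aeval (P : MvPolynomial (Fin 2 × Fin 2) k) (φ : Fin 2 × Fin 2 → Polynomial k)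
    (s : k) :
    (MvPolynomial.aeval φ P).eval s = MvPolynomial.eval (fun p => (φ p).eval s) P := by
  rw [MvPolynomial.aeval_def, ← Polynomial.coe_evalRingHom, MvPolynomial.eval₂_comp_left]
  have h1 : (Polynomial.evalRingHom s).comp (algebraMap k (Polynomial k)) = RingHom.id k := by
    ext a; simp
  rw [h1]
  rfl

/-- A polynomial function vanishing on the big cell vanishes. -/
lemma vanish [CharZero k] {f : Matrix.SpecialLinearGroup (Fin 2) k → k}
    {P : MvPolynomial (Fin 2 × Fin 2) k}
    (hP : ∀ g : Matrix.SpecialLinearGroup (Fin 2) k,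
      f g = MvPolynomial.eval (fun p => (g : Matrix (Fin 2) (Fin 2) k) p.1 p.2) P)
    (h0 : ∀ g : Matrix.SpecialLinearGroup (Fin 2) k,
      (g : Matrix (Fin 2) (Fin 2) k) 1 0 ≠ 0 → f g = 0) :
    f = 0 := by
  funext g
  by_cases hc : (g : Matrix (Fin 2) (Fin 2) k) 1 0 ≠ 0
  · simpa using h0 g hc
  push_neg at hc
  have h11 : (g : Matrix (Fin 2) (Fin 2) k) 1 1 ≠ 0 := by
    intro h
    have := det_rel g
    rw [hc, h] at this; simp at this
  set φ : Fin 2 × Fin 2 → Polynomial k := fun p =>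
    if p.2 = 0 then Polynomial.C ((g : Matrix (Fin 2) (Fin 2) k) p.1 0) +
      Polynomial.C ((g : Matrix (Fin 2) (Fin 2) k) p.1 1) * Polynomial.X
    else Polynomial.C ((g : Matrix (Fin 2) (Fin 2) k) p.1 1) with hφ
  have hent : ∀ s : k, ∀ p : Fin 2 × Fin 2,
      ((g * lowerElt k s : Matrix.SpecialLinearGroup (Fin 2) k) :
        Matrix (Fin 2) (Fin 2) k) p.1 p.2 = (φ p).eval s := by
    intro s p
    obtain ⟨i, j⟩ := p
    fin_cases j <;> (simp only [Matrix.SpecialLinearGroup.coe_mul]; simp [hφ, lowerElt, Matrix.mul_apply, Fin.sum_univ_two])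
  set q : Polynomial k := MvPolynomial.aeval φ P with hq
  have hqeval : ∀ s : k, q.eval s = f (g * lowerElt k s) := by
    intro s
    rw [hq, eval_aeval, hP (g * lowerElt k s)]
    rw [show (fun p : Fin 2 × Fin 2 => (φ p).eval s) =
      (fun p : Fin 2 × Fin 2 => ((g * lowerElt k s : Matrix.SpecialLinearGroup (Fin 2) k) :
        Matrix (Fin 2) (Fin 2) k) p.1 p.2) from funext fun p => (hent s p).symm]
  have hq0 : q = 0 := by
    apply Polynomial.eq_zero_of_infinite_isRoot
    apply Set.Infinite.mono (s := {x : k | x ≠ 0})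
    · intro s hs
      have hmul : ((g * lowerElt k s : Matrix.SpecialLinearGroup (Fin 2) k) :
          Matrix (Fin 2) (Fin 2) k) 1 0 ≠ 0 := by
        have heq : ((g * lowerElt k s : Matrix.SpecialLinearGroup (Fin 2) k) :
            Matrix (Fin 2) (Fin 2) k) 1 0 = (g : Matrix (Fin 2) (Fin 2) k) 1 1 * s := by
          simp only [Matrix.SpecialLinearGroup.coe_mul]; simp [lowerElt, Matrix.mul_apply, Fin.sum_univ_two, hc]
        rw [heq]
        exact mul_ne_zero h11 hs
      simp only [Set.mem_setOf_eq, Polynomial.IsRoot, hqeval s]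
      exact h0 _ hmul
    · exact (Set.finite_singleton (0 : k)).infinite_compl
  have := hqeval 0
  rw [hq0] at this
  simp only [Polynomial.eval_zero] at this
  have hg : f g = q.eval 0 := by
    rw [hq, eval_aeval, hP g]
    rw [show (fun p : Fin 2 × Fin 2 => (φ p).eval 0) =
      (fun p : Fin 2 × Fin 2 => (g : Matrix (Fin 2) (Fin 2) k) p.1 p.2) from funext fun p => by
        obtain ⟨i, j⟩ := p
        fin_cases j <;> simp [hφ]]
  rw [hq0] at hg
  simpa using hg


def restrictL (k : Type*) [Field k] :
    (Matrix.SpecialLinearGroup (Fin 2) k → k) →ₗ[k] (k → k) where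
  toFun f := fun x => f (weylElt k * unipElt k x)
  map_add' _ _ := rfl
  map_smul' _ _ := rfl

noncomputable def evalL (k : Type*) [Field k] : Polynomial k →ₗ[k] (k → k) where
  toFun P := fun x => P.eval x
  map_add' P Q := by funext x; simp
  map_smul' c P := by funext x; simp

def fnFun (k : Type*) [Field k] (d n : ℕ) : Matrix.SpecialLinearGroup (Fin 2) k → k :=
  fun g => ((g : Matrix (Fin 2) (Fin 2) k) 1 0) ^ (d - n) *
    ((g : Matrix (Fin 2) (Fin 2) k) 1 1) ^ n

lemma borel_row (t : kˣ) (x : k) (g : Matrix.SpecialLinearGroup (Fin 2) k) (j : Fin 2) :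
    ((borelElt k t x * g : Matrix.SpecialLinearGroup (Fin 2) k) :
      Matrix (Fin 2) (Fin 2) k) 1 j = (t : k)⁻¹ * (g : Matrix (Fin 2) (Fin 2) k) 1 j := by
  simp only [Matrix.SpecialLinearGroup.coe_mul]; simp [borelElt, Matrix.mul_apply, Fin.sum_univ_two]

lemma fn_mem (d n : ℕ) (hn : n ≤ d) : fnFun k d n ∈ borelWeilSpace k d := by
  constructor
  · refine ⟨(MvPolynomial.X (1, 0)) ^ (d - n) * (MvPolynomial.X (1, 1)) ^ n, fun g => ?_⟩
    simp [fnFun]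
  · intro t x g
    simp only [fnFun, borel_row, mul_pow]
    rw [show ∀ a b c e : k, a * b * (c * e) = (a * c) * (b * e) from fun a b c e => by ring,
      ← pow_add, Nat.sub_add_cancel hn]
    try ring

lemma fn_restrict (d n : ℕ) (hn : n ≤ d) (x : k) :
    fnFun k d n (weylElt k * unipElt k x) = (-1) ^ d * x ^ n := by
  simp only [fnFun, wu_coe]
  rw [show (!![0, 1; -1, -x] : Matrix (Fin 2) (Fin 2) k) 1 0 = -1 by simp,
    show (!![0, 1; -1, -x] : Matrix (Fin 2) (Fin 2) k) 1 1 = -x by simp]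
  rw [show (-x : k) = (-1) * x by ring, mul_pow, show ∀ a b c : k, a * (b * c) = (a * b) * c
    from fun a b c => by ring, ← pow_add, Nat.sub_add_cancel hn]

lemma lower_coe (s : k) : ((lowerElt k s : Matrix.SpecialLinearGroup (Fin 2) k) :
    Matrix (Fin 2) (Fin 2) k) = !![1, 0; s, 1] := rfl

/-- Restriction of an element of the Borel-Weil space to `wU` is a polynomial of degree ≤ d. -/
lemma exists_poly_restrict [CharZero k] {d : ℕ} {f : Matrix.SpecialLinearGroup (Fin 2) k → k}
    (hf : f ∈ borelWeilSpace k d) :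
    ∃ B : Polynomial k, B.natDegree ≤ d ∧
      ∀ x : k, f (weylElt k * unipElt k x) = B.eval x := by
  obtain ⟨⟨P, hP⟩, heq⟩ := hf
  set φw : Fin 2 × Fin 2 → Polynomial k := fun p =>
    !![0, 1; -1, -Polynomial.X] p.1 p.2 with hφw
  set φl : Fin 2 × Fin 2 → Polynomial k := fun p =>
    !![1, 0; Polynomial.X, 1] p.1 p.2 with hφl
  set B : Polynomial k := MvPolynomial.aeval φw P with hBdef
  set A : Polynomial k := MvPolynomial.aeval φl P with hAdef
  have hB : ∀ x : k, f (weylElt k * unipElt k x) = B.eval x := by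
    intro x
    rw [hBdef, eval_aeval, hP]
    rw [show (fun p : Fin 2 × Fin 2 =>
        ((weylElt k * unipElt k x : Matrix.SpecialLinearGroup (Fin 2) k) :
          Matrix (Fin 2) (Fin 2) k) p.1 p.2) =
      (fun p : Fin 2 × Fin 2 => (φw p).eval x) from funext fun p => by
        obtain ⟨i, j⟩ := p
        fin_cases i <;> fin_cases j <;> (simp only [Matrix.SpecialLinearGroup.coe_mul]; simp [weylElt, unipElt, Matrix.mul_apply, Fin.sum_univ_two, hφw])]
  have hA : ∀ s : k, f (lowerElt k s) = A.eval s := by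
    intro s
    rw [hAdef, eval_aeval, hP]
    rw [show (fun p : Fin 2 × Fin 2 =>
        ((lowerElt k s : Matrix.SpecialLinearGroup (Fin 2) k) :
          Matrix (Fin 2) (Fin 2) k) p.1 p.2) =
      (fun p : Fin 2 × Fin 2 => (φl p).eval s) from funext fun p => by
        obtain ⟨i, j⟩ := p
        fin_cases i <;> fin_cases j <;> simp [lowerElt, hφl]]
  refine ⟨B, ?_, hB⟩
  -- the degree bound
  have hrel : ∀ s : k, s ≠ 0 → A.eval s = (-s) ^ d * B.eval s⁻¹ := by
    intro s hs
    have h10 : ((lowerElt k s : Matrix.SpecialLinearGroup (Fin 2) k) :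
        Matrix (Fin 2) (Fin 2) k) 1 0 = s := by simp [lower_coe]
    have h11 : ((lowerElt k s : Matrix.SpecialLinearGroup (Fin 2) k) :
        Matrix (Fin 2) (Fin 2) k) 1 1 = 1 := by simp [lower_coe]
    have hk := key (f := f) (d := d) ⟨⟨P, hP⟩, heq⟩ (lowerElt k s) (by rw [h10]; exact hs)
    rw [h10, h11] at hk
    rw [← hA, hk, hB, one_div]
  set M : ℕ := B.natDegree with hM
  set D : Polynomial k := ∑ n ∈ Finset.range (M + 1),
    Polynomial.monomial (M + d - n) ((-1 : k) ^ d * B.coeff n) with hD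
  have hE : Polynomial.X ^ M * A = D := by
    rw [← sub_eq_zero]
    apply Polynomial.eq_zero_of_infinite_isRoot
    apply Set.Infinite.mono (s := {x : k | x ≠ 0})
    · intro s hs
      simp only [Set.mem_setOf_eq] at hs
      simp only [Set.mem_setOf_eq, Polynomial.IsRoot.def]
      rw [Polynomial.eval_sub, Polynomial.eval_mul, Polynomial.eval_pow, Polynomial.eval_X,
        hrel s hs, hD]
      rw [Polynomial.eval_finset_sum]
      rw [Polynomial.eval_eq_sum_range (s⁻¹), ← hM, Finset.mul_sum, Finset.mul_sum]
      rw [sub_eq_zero]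
      apply Finset.sum_congr rfl
      intro n hn
      rw [Finset.mem_range] at hn
      have hnM : n ≤ M := Nat.lt_succ_iff.mp hn
      rw [Polynomial.eval_monomial, pow_sub₀ s hs (by omega : n ≤ M + d), inv_pow]
      rw [neg_pow s d]
      field_simp
      ring
    · exact (Set.finite_singleton (0 : k)).infinite_compl
  rw [Polynomial.natDegree_le_iff_coeff_eq_zero]
  intro N hN
  by_cases hNM : M < N
  · exact Polynomial.coeff_eq_zero_of_natDegree_lt (by rw [← hM]; exact hNM)
  push_neg at hNM
  have hcoeff := congrArg (fun p => Polynomial.coeff p (M + d - N)) hE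
  beta_reduce at hcoeff
  rw [Polynomial.coeff_X_pow_mul', hD, Polynomial.finset_sum_coeff] at hcoeff
  rw [if_neg (by omega)] at hcoeff
  rw [Finset.sum_eq_single N] at hcoeff
  · rw [Polynomial.coeff_monomial, if_pos rfl] at hcoeff
    have hne : ((-1 : k)) ^ d ≠ 0 := pow_ne_zero _ (by norm_num)
    exact (mul_eq_zero.mp hcoeff.symm).resolve_left hne
  · intro n hn hnN
    rw [Finset.mem_range] at hn
    rw [Polynomial.coeff_monomial, if_neg (by omega)]
  · intro hNmem
    exact absurd (Finset.mem_range.mpr (by omega)) hNmem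

end BWaux

end BWauxSection

open BWaux in
/-- Borel–Weil for `SL₂`: in characteristic zero, the space of regular functions on `SL₂(k)`
with `f(bg) = t^{-d} f(g)` for upper triangular `b` has dimension `d + 1`; moreover the
restriction `f ↦ (x ↦ f(w·[[1,x],[0,1]]))` is injective on this space and identifies it with
the polynomials in `x` of degree at most `d`. -/
theorem stmt6 (k : Type*) [Field k] [CharZero k] (d : ℕ) :
    Module.finrank k (borelWeilSpace k d) = d + 1 ∧
    Set.InjOn
      (fun f : Matrix.SpecialLinearGroup (Fin 2) k → k =>
        fun x : k => f (weylElt k * unipElt k x))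
      (borelWeilSpace k d) ∧
    ((fun f : Matrix.SpecialLinearGroup (Fin 2) k → k =>
        fun x : k => f (weylElt k * unipElt k x)) '' (borelWeilSpace k d) =
      {F : k → k | ∃ P : Polynomial k, P.natDegree ≤ d ∧ ∀ x, F x = P.eval x}) := by
  classical
  have hinj : Set.InjOn
      (fun f : Matrix.SpecialLinearGroup (Fin 2) k → k =>
        fun x : k => f (weylElt k * unipElt k x))
      (borelWeilSpace k d) := by
    intro f hf h hh hfh
    have hsub : f - h ∈ borelWeilSpace k d := sub_mem hf hh
    obtain ⟨⟨P, hP⟩, -⟩ := id hsub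
    have h0 : ∀ g : Matrix.SpecialLinearGroup (Fin 2) k,
        (g : Matrix (Fin 2) (Fin 2) k) 1 0 ≠ 0 → (f - h) g = 0 := by
      intro g hc
      rw [key hsub g hc]
      have hz : (f - h) (weylElt k * unipElt k
          ((g : Matrix (Fin 2) (Fin 2) k) 1 1 / (g : Matrix (Fin 2) (Fin 2) k) 1 0)) = 0 := by
        simp only [Pi.sub_apply, sub_eq_zero]
        exact congrFun hfh _
      rw [hz, mul_zero]
    have := vanish hP h0
    exact sub_eq_zero.mp this
  have himg : ((fun f : Matrix.SpecialLinearGroup (Fin 2) k → k =>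
        fun x : k => f (weylElt k * unipElt k x)) '' (borelWeilSpace k d) =
      {F : k → k | ∃ P : Polynomial k, P.natDegree ≤ d ∧ ∀ x, F x = P.eval x}) := by
    ext F
    constructor
    · rintro ⟨f, hf, rfl⟩
      obtain ⟨B, hBd, hB⟩ := exists_poly_restrict hf
      exact ⟨B, hBd, fun x => hB x⟩
    · rintro ⟨P, hPd, hF⟩
      refine ⟨∑ n ∈ Finset.range (d + 1), ((-1 : k) ^ d * P.coeff n) • fnFun k d n, ?_, ?_⟩
      · exact Submodule.sum_mem _ fun n hn => Submodule.smul_mem _ _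
          (fn_mem d n (Nat.lt_succ_iff.mp (Finset.mem_range.mp hn)))
      · funext x
        simp only [Finset.sum_apply, Pi.smul_apply, smul_eq_mul]
        rw [hF x, Polynomial.eval_eq_sum_range' (Nat.lt_succ_of_le hPd)]
        apply Finset.sum_congr rfl
        intro n hn
        rw [fn_restrict d n (Nat.lt_succ_iff.mp (Finset.mem_range.mp hn))]
        have h1 : ((-1 : k)) ^ d * (-1 : k) ^ d = 1 := by
          rw [← mul_pow]; norm_num
        rw [show ((-1 : k) ^ d * P.coeff n) * ((-1 : k) ^ d * x ^ n) =
          ((-1 : k) ^ d * (-1 : k) ^ d) * (P.coeff n * x ^ n) from by ring, h1, one_mul]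
  refine ⟨?_, hinj, himg⟩
  -- dimension count
  set V := borelWeilSpace k d with hV
  have hLinj : Function.Injective ((restrictL k).comp V.subtype) := by
    intro a b hab
    exact Subtype.ext (hinj a.2 b.2 hab)
  have e1 : V ≃ₗ[k] LinearMap.range ((restrictL k).comp V.subtype) :=
    LinearEquiv.ofInjective _ hLinj
  have hTinj : Function.Injective (evalL k) := by
    intro P Q h
    exact Polynomial.funext fun r => congrFun h r
  have e2 : Polynomial.degreeLE k (d : ℕ) ≃ₗ[k]
      Submodule.map (evalL k) (Polynomial.degreeLE k (d : ℕ)) :=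
    Submodule.equivMapOfInjective _ hTinj _
  have hrange : LinearMap.range ((restrictL k).comp V.subtype) =
      Submodule.map (evalL k) (Polynomial.degreeLE k (d : ℕ)) := by
    apply SetLike.ext'
    rw [LinearMap.range_comp, Submodule.range_subtype]
    show ⇑(restrictL k) '' (V : Set _) = _
    rw [show ⇑(restrictL k) = (fun f : Matrix.SpecialLinearGroup (Fin 2) k → k =>
      fun x : k => f (weylElt k * unipElt k x)) from rfl, hV, himg]
    ext F
    simp only [Set.mem_setOf_eq, Submodule.map_coe, Set.mem_image, SetLike.mem_coe,
      Polynomial.mem_degreeLE]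
    constructor
    · rintro ⟨P, hPd, hF⟩
      exact ⟨P, Polynomial.natDegree_le_iff_degree_le.mp hPd,
        (funext fun x => (hF x).symm : ⇑(evalL k) P = F)⟩
    · rintro ⟨P, hPd, rfl⟩
      exact ⟨P, Polynomial.natDegree_le_iff_degree_le.mpr hPd, fun x => rfl⟩
  have h3 : Module.finrank k V =
      Module.finrank k (Polynomial.degreeLE k (d : ℕ)) := by
    rw [e1.finrank_eq, hrange, ← e2.finrank_eq]
  rw [h3, ← Polynomial.degreeLT_succ_eq_degreeLE,
    (Polynomial.degreeLTEquiv k (d + 1)).finrank_eq, Module.finrank_fin_fun]
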